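/- Let r_α(x) = (1 - |x|² e^{2α})/√(32π²α) for |x| ≤ e^{-α} and r_α(x) = 0 for e^{-α} < |x| ≤ 1. Then for every fixed λ > 0, ∫_{|x| ≤ e^{-α}} (e^{|r_α(x)|²/λ²} - 1) dx → 0 as α → ∞. -/
import Mathlib


open MeasureTheory Real Filter

/-- With `r_α(x) = (1-|x|²e^{2α})/√(32π²α)` for `|x| ≤ e^{-α}`, for every fixed `λ > 0`
`∫_{|x| ≤ e^{-α}} (e^{|r_α|²/λ²} - 1) dx → 0` as `α → ∞`. -/
theorem remainder_orlicz_tendsto_zero (lam : ℝ) (hlam : 0 < lam) :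
    Tendsto
      (fun α : ℝ => 2 * π ^ 2 *
        ∫ r in (0 : ℝ)..Real.exp (-α),
          (Real.exp (((1 - r ^ 2 * Real.exp (2 * α)) / Real.sqrt (32 * π ^ 2 * α)) ^ 2
              / lam ^ 2) - 1) * r ^ 3)
      atTop (nhds 0) := by
  have hπ : (0:ℝ) < π := Real.pi_pos
  set C : ℝ := 1 / (32 * π ^ 2 * lam ^ 2) with hC
  have hg : Tendsto (fun α : ℝ =>
      2 * π ^ 2 * ((Real.exp C - 1) * ((Real.exp (-α)) ^ 4 / 4))) atTop (nhds 0) := by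
    have h1 : Tendsto (fun α : ℝ => Real.exp (-α)) atTop (nhds 0) := by
      exact Real.tendsto_exp_atBot.comp tendsto_neg_atTop_atBot
    have h2 := ((((h1.pow 4).div_const 4).const_mul (Real.exp C - 1)).const_mul (2 * π ^ 2))
    simpa using h2
  refine squeeze_zero' ?_ ?_ hg
  · filter_upwards [eventually_ge_atTop (1:ℝ)] with α hα
    have hb : (0:ℝ) ≤ Real.exp (-α) := (Real.exp_pos _).le
    have hint : 0 ≤ ∫ r in (0:ℝ)..Real.exp (-α),
        (Real.exp (((1 - r ^ 2 * Real.exp (2 * α)) / Real.sqrt (32 * π ^ 2 * α)) ^ 2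
            / lam ^ 2) - 1) * r ^ 3 := by
      apply intervalIntegral.integral_nonneg hb
      intro u hu
      have hu0 : 0 ≤ u := hu.1
      have he : 1 ≤ Real.exp (((1 - u ^ 2 * Real.exp (2 * α)) / Real.sqrt (32 * π ^ 2 * α)) ^ 2
          / lam ^ 2) := Real.one_le_exp (by positivity)
      have : 0 ≤ u ^ 3 := by positivity
      nlinarith
    positivity
  · filter_upwards [eventually_ge_atTop (1:ℝ)] with α hα
    have hα0 : (0:ℝ) < α := by linarith
    have hb : (0:ℝ) ≤ Real.exp (-α) := (Real.exp_pos _).le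
    have hA : (0:ℝ) < 32 * π ^ 2 * α := by positivity
    have hcont : Continuous (fun r : ℝ =>
        (Real.exp (((1 - r ^ 2 * Real.exp (2 * α)) / Real.sqrt (32 * π ^ 2 * α)) ^ 2
            / lam ^ 2) - 1) * r ^ 3) := by
      fun_prop
    have hint1 : IntervalIntegrable (fun r : ℝ =>
        (Real.exp (((1 - r ^ 2 * Real.exp (2 * α)) / Real.sqrt (32 * π ^ 2 * α)) ^ 2
            / lam ^ 2) - 1) * r ^ 3) volume 0 (Real.exp (-α)) :=
      hcont.intervalIntegrable (0:ℝ) (Real.exp (-α))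
    have hint2 : IntervalIntegrable (fun r : ℝ => (Real.exp C - 1) * r ^ 3) volume 0 (Real.exp (-α)) := by
      apply Continuous.intervalIntegrable
      fun_prop
    have hmono : (∫ r in (0:ℝ)..Real.exp (-α),
        (Real.exp (((1 - r ^ 2 * Real.exp (2 * α)) / Real.sqrt (32 * π ^ 2 * α)) ^ 2
            / lam ^ 2) - 1) * r ^ 3)
        ≤ ∫ r in (0:ℝ)..Real.exp (-α), (Real.exp C - 1) * r ^ 3 := by
      apply intervalIntegral.integral_mono_on hb hint1 hint2
      intro u hu
      have hu0 : 0 ≤ u := hu.1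
      have hu1 : u ≤ Real.exp (-α) := hu.2
      have ht1 : u ^ 2 * Real.exp (2 * α) ≤ 1 := by
        have h1 : u ^ 2 ≤ Real.exp (-α) ^ 2 := by nlinarith
        have h2 : Real.exp (-α) ^ 2 * Real.exp (2 * α) = 1 := by
          rw [← Real.exp_nat_mul, ← Real.exp_add]; norm_num
        nlinarith [Real.exp_pos (2 * α)]
      have ht0 : 0 ≤ u ^ 2 * Real.exp (2 * α) := by positivity
      have hexp : ((1 - u ^ 2 * Real.exp (2 * α)) / Real.sqrt (32 * π ^ 2 * α)) ^ 2
          / lam ^ 2 ≤ C := by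
        rw [div_pow, Real.sq_sqrt hA.le, div_div, hC]
        apply div_le_div₀ (by norm_num) (by nlinarith) (by positivity)
        nlinarith [mul_nonneg (mul_nonneg (pow_pos hπ 2).le (pow_pos hlam 2).le) (sub_nonneg.mpr hα)]
      have := Real.exp_le_exp.mpr hexp
      have hu3 : 0 ≤ u ^ 3 := by positivity
      nlinarith
    have hcalc : (∫ r in (0:ℝ)..Real.exp (-α), (Real.exp C - 1) * r ^ 3)
        = (Real.exp C - 1) * ((Real.exp (-α)) ^ 4 / 4) := by
      rw [intervalIntegral.integral_const_mul, integral_pow]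
      norm_num
    calc 2 * π ^ 2 * ∫ r in (0:ℝ)..Real.exp (-α),
          (Real.exp (((1 - r ^ 2 * Real.exp (2 * α)) / Real.sqrt (32 * π ^ 2 * α)) ^ 2
              / lam ^ 2) - 1) * r ^ 3
        ≤ 2 * π ^ 2 * ∫ r in (0:ℝ)..Real.exp (-α), (Real.exp C - 1) * r ^ 3 := by
          apply mul_le_mul_of_nonneg_left hmono (by positivity)
      _ = 2 * π ^ 2 * ((Real.exp C - 1) * ((Real.exp (-α)) ^ 4 / 4)) := by rw [hcalc]
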